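/- arXiv:2205.07698 — 2 statements merged into one kernel-verified Lean document; each statement's English description precedes it below -/
import Mathlib

section
/- Let p > 2 be a real number and let t ∈ (0, 1/(p−1)] be such that (1 − t(p−1))/(p−2) < 2. Then for every s ≥ 0, ((1 − t(p−1))²/(4t(p−2)²))·((1+s)^t − 1) ≤ ψ_p(s), where ψ_p(s) = ∫₀^s ψ'(u)^{(p−2)/(p−1)} du. -/
/-- The derivative ψ'(s) = 1/((1+ln(1+|s|))²(1+|s|)). -/
noncomputable def psi' (s : ℝ) : ℝ :=
  1 / ((1 + Real.log (1 + |s|)) ^ 2 * (1 + |s|))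

/-- ψ_p(s) = ∫₀^s ψ'(t)^((p−2)/(p−1)) dt. -/
noncomputable def psip (p s : ℝ) : ℝ :=
  ∫ t in (0:ℝ)..s, (psi' t) ^ ((p - 2) / (p - 1))

lemma psi'_denom_pos (u : ℝ) : 0 < (1 + Real.log (1 + |u|)) ^ 2 * (1 + |u|) := by
  have h1 : (0:ℝ) ≤ Real.log (1 + |u|) := Real.log_nonneg (by simp [abs_nonneg])
  have h2 : (0:ℝ) < 1 + |u| := by positivity
  positivity

lemma psi'_pos (u : ℝ) : 0 < psi' u := by
  unfold psi'; exact div_pos one_pos (psi'_denom_pos u)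

lemma continuous_psi' : Continuous psi' := by
  unfold psi'
  apply Continuous.div continuous_const
  · apply Continuous.mul
    · apply Continuous.pow
      exact continuous_const.add ((continuous_const.add continuous_abs).log (fun x => (by positivity : (0:ℝ) < 1 + |x|).ne'))
    · continuity
  · exact fun x => (psi'_denom_pos x).ne'

lemma key (p t : ℝ) (hp : 2 < p) (ht0 : 0 < t) (ht1 : t ≤ 1/(p-1))
    (ht2 : (1 - t*(p-1))/(p-2) < 2) (u : ℝ) (hu : 0 ≤ u) :
    (1 - t*(p-1))^2 / (4*t*(p-2)^2) * t * (1+u) ^ (t-1) ≤ psi' u ^ ((p-2)/(p-1)) := by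
  have hp2 : (0:ℝ) < p - 2 := by linarith
  have hp1 : (0:ℝ) < p - 1 := by linarith
  set α := (p-2)/(p-1) with hαdef
  have hα0 : 0 < α := div_pos hp2 hp1
  have hα1 : α < 1 := (div_lt_one hp1).2 (by linarith)
  set r := (1 - t*(p-1))/(2*(p-2)) with hrdef
  have htp1 : t * (p-1) ≤ 1 := by
    have := (le_div_iff₀ hp1).1 ht1
    linarith
  have hr0 : 0 ≤ r := div_nonneg (by linarith) (by linarith)
  have hr1 : r < 1 := by
    rw [hrdef, div_lt_one (by linarith)]
    rw [div_lt_iff₀ hp2] at ht2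
    linarith
  set x := 1 + u with hxdef
  have hx1 : (1:ℝ) ≤ x := by simp [hxdef]; linarith
  have hx0 : (0:ℝ) < x := by linarith
  set z := 1 + Real.log x with hzdef
  have hz1 : (1:ℝ) ≤ z := by
    have := Real.log_nonneg hx1
    simp [hzdef]; linarith
  have hz0 : (0:ℝ) < z := by linarith
  have habs : |u| = u := abs_of_nonneg hu
  have hpsi : psi' u = 1 / (z^2 * x) := by
    unfold psi'; rw [habs]
  rw [hpsi]
  set β := 1 - t - α with hβdef
  have hβr : β = 2*α*r := by
    rw [hβdef, hrdef, hαdef]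
    field_simp
    ring
  have hβ0 : 0 ≤ β := by
    have : 0 ≤ 2*α*r := by positivity
    linarith [hβr ▸ this]
  have hCt : (1 - t*(p-1))^2 / (4*t*(p-2)^2) * t = r^2 := by
    rw [hrdef]
    field_simp
    ring
  rw [hCt]
  -- reduce to r^2 * x^(t-1) * (z^(2α) * x^α) ≤ 1
  have hA : (1 / (z^2 * x)) ^ α = 1 / (z^(2*α) * x^α) := by
    rw [one_div, Real.inv_rpow (by positivity), Real.mul_rpow (by positivity) hx0.le,
      ← one_div]
    congr 2
    rw [← Real.rpow_natCast z 2, ← Real.rpow_mul hz0.le]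
    norm_num
  rw [hA, le_div_iff₀ (by positivity)]
  -- main chain
  have hmain : r^2 * z^(2*α) ≤ x^β := by
    rcases eq_or_lt_of_le hr0 with h0 | hr
    · rw [← h0]
      simp
      positivity
    · have hlog : Real.log x ≤ (x^r - 1)/r := by
        have h1 := Real.log_le_sub_one_of_pos (Real.rpow_pos_of_pos hx0 r)
        rw [Real.log_rpow hx0] at h1
        rw [le_div_iff₀ hr]; linarith
      have hz : z ≤ x^r / r := by
        have h1r : (1:ℝ) ≤ 1/r := one_le_one_div hr hr1.le
        have e : (x^r - 1)/r = x^r/r - 1/r := by ring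
        rw [hzdef]
        rw [e] at hlog
        linarith
      have h2 : z^(2*α) ≤ (x^r/r)^(2*α) :=
        Real.rpow_le_rpow hz0.le hz (by positivity)
      have h3 : (x^r/r)^(2*α) = x^β / r^(2*α) := by
        rw [Real.div_rpow (Real.rpow_nonneg hx0.le r) hr0, ← Real.rpow_mul hx0.le]
        congr 2
        rw [hβr]; ring
      have h4 : r^2 * (x^β / r^(2*α)) = r^((2:ℝ)-2*α) * x^β := by
        rw [Real.rpow_sub hr, ← Real.rpow_natCast r 2]
        push_cast
        ring
      have h5 : r^((2:ℝ)-2*α) ≤ 1 :=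
        Real.rpow_le_one hr0 hr1.le (by linarith)
      calc r^2 * z^(2*α) ≤ r^2 * (x^β / r^(2*α)) := by
            rw [h3] at h2
            exact mul_le_mul_of_nonneg_left h2 (by positivity)
        _ = r^((2:ℝ)-2*α) * x^β := h4
        _ ≤ 1 * x^β := mul_le_mul_of_nonneg_right h5 (Real.rpow_nonneg hx0.le β)
        _ = x^β := one_mul _
  calc r^2 * x^(t-1) * (z^(2*α) * x^α) = (r^2 * z^(2*α)) * (x^α * x^(t-1)) := by ring
    _ ≤ x^β * (x^α * x^(t-1)) :=
        mul_le_mul_of_nonneg_right hmain (by positivity)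
    _ = x^(β + (α + (t-1))) := by rw [← Real.rpow_add hx0, ← Real.rpow_add hx0]
    _ = 1 := by rw [show β + (α + (t-1)) = 0 by rw [hβdef]; ring, Real.rpow_zero]
theorem stmt_3 (p t : ℝ) (hp : 2 < p) (ht : t ∈ Set.Ioc (0 : ℝ) (1 / (p - 1)))
    (ht2 : (1 - t * (p - 1)) / (p - 2) < 2) (s : ℝ) (hs : 0 ≤ s) :
    (1 - t * (p - 1)) ^ 2 / (4 * t * (p - 2) ^ 2) * ((1 + s) ^ t - 1) ≤ psip p s := by
  obtain ⟨ht0, ht1⟩ := ht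
  have ht0' : t ≠ 0 := ht0.ne'
  set C := (1 - t * (p - 1)) ^ 2 / (4 * t * (p - 2) ^ 2) with hCdef
  have hint : ∫ u in (0:ℝ)..s, C * t * (1+u)^(t-1) = C * ((1 + s) ^ t - 1) := by
    rw [intervalIntegral.integral_const_mul]
    have h1 : ∫ u in (0:ℝ)..s, (1+u)^(t-1) = ∫ x in (1+(0:ℝ))..(1+s), x^(t-1) :=
      intervalIntegral.integral_comp_add_left (fun x => x^(t-1)) 1
    have h2 : t - 1 + 1 = t := by ring
    rw [h1, integral_rpow (Or.inl (by linarith)), h2]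
    norm_num
    field_simp
  have hcont1 : ContinuousOn (fun u : ℝ => C * t * (1+u)^(t-1)) (Set.uIcc 0 s) := by
    apply ContinuousOn.mul continuousOn_const
    apply ContinuousOn.rpow_const (by fun_prop)
    intro x hx
    rw [Set.uIcc_of_le hs] at hx
    left
    have := hx.1
    positivity
  have hInt1 : IntervalIntegrable (fun u : ℝ => C * t * (1+u)^(t-1)) MeasureTheory.volume 0 s :=
    hcont1.intervalIntegrable
  have hInt2 : IntervalIntegrable (fun u : ℝ => psi' u ^ ((p-2)/(p-1))) MeasureTheory.volume 0 s :=
    (continuous_psi'.rpow_const (fun x => Or.inl (psi'_pos x).ne')).continuousOn.intervalIntegrable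
  have hmono := intervalIntegral.integral_mono_on hs hInt1 hInt2
    (fun u hu => key p t hp ht0 ht1 ht2 u hu.1)
  rw [hint] at hmono
  exact hmono
end

section
/- For every τ ∈ (0,1) and every s ∈ ℝ, 1/ψ'(s) ≤ (4/τ²)·((|χ̃(s)|/τ) + 1)^{2(1+τ)/(1−τ)}, where ψ'(s) = 1/((1+ln(1+|s|))²(1+|s|)) and χ̃(s) = ∫₀^s √(ψ'(t)) dt. -/
/-- χ̃(s) = ∫₀^s √(ψ'(t)) dt. -/
noncomputable def chit (s : ℝ) : ℝ :=
  ∫ t in (0:ℝ)..s, Real.sqrt (psi' t)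

lemma log_le_aux {c x : ℝ} (hc : 0 < c) (hx : 1 ≤ x) :
    Real.log x ≤ (x ^ c - 1) / c := by
  have h1 : 0 < x := lt_of_lt_of_le one_pos hx
  rw [le_div_iff₀ hc, mul_comm]
  have := Real.log_le_sub_one_of_pos (Real.rpow_pos_of_pos h1 c)
  rwa [Real.log_rpow h1] at this

lemma one_le_rpow_aux {x c : ℝ} (hx : 1 ≤ x) (hc : 0 ≤ c) : 1 ≤ x ^ c :=
  Real.one_le_rpow hx hc

lemma key_log {τ x : ℝ} (hτ0 : 0 < τ) (hτ2 : τ ≤ 2) (hx : 1 ≤ x) :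
    1 + Real.log x ≤ (2 / τ) * x ^ (τ / 2) := by
  have h1 := log_le_aux (half_pos hτ0) hx
  have h2 : (1:ℝ) ≤ x ^ (τ / 2) := one_le_rpow_aux hx (by linarith)
  have h3 : Real.log x * (τ / 2) ≤ x ^ (τ / 2) - 1 :=
    (le_div_iff₀ (half_pos hτ0)).mp h1
  have h4 : 0 < x ^ (τ / 2) := by linarith
  rw [div_mul_eq_mul_div, le_div_iff₀ hτ0]
  nlinarith

lemma psi'_neg (t : ℝ) : psi' (-t) = psi' t := by simp [psi']

lemma chit_neg (s : ℝ) : chit (-s) = - chit s := by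
  have h := intervalIntegral.integral_comp_neg (fun t => Real.sqrt (psi' t)) (a := s) (b := 0)
  simp only [neg_zero, psi'_neg] at h
  rw [chit, ← h, intervalIntegral.integral_symm, chit]

lemma sqrt_psi'_eq {t : ℝ} (ht : 0 ≤ t) :
    Real.sqrt (psi' t) = 1 / ((1 + Real.log (1 + t)) * (1 + t) ^ ((1:ℝ)/2)) := by
  have hL : 0 ≤ Real.log (1 + t) := Real.log_nonneg (by linarith)
  rw [psi', abs_of_nonneg ht, one_div, Real.sqrt_inv,
    Real.sqrt_mul (sq_nonneg _), Real.sqrt_sq (by linarith : (0:ℝ) ≤ 1 + Real.log (1+t)),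
    Real.sqrt_eq_rpow]
  exact (one_div _).symm

lemma ptwise {τ t : ℝ} (hτ0 : 0 < τ) (hτ2 : τ ≤ 2) (ht : 0 ≤ t) :
    τ / (2 + τ) * (1 + t) ^ (-(1 + τ) / 2) ≤ Real.sqrt (psi' t) := by
  have hX : (0:ℝ) < 1 + t := by linarith
  have hL : 0 ≤ Real.log (1 + t) := Real.log_nonneg (by linarith)
  have hY : 0 < (1 + t) ^ (τ / 2) := Real.rpow_pos_of_pos hX _
  have hY1 : (1:ℝ) ≤ (1 + t) ^ (τ / 2) := one_le_rpow_aux (by linarith) (by linarith)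
  have hkey : 1 + Real.log (1 + t) ≤ ((2 + τ) / τ) * (1 + t) ^ (τ / 2) := by
    have := key_log hτ0 hτ2 (show (1:ℝ) ≤ 1 + t by linarith)
    have h2 : (2 / τ) * (1+t) ^ (τ/2) ≤ ((2 + τ) / τ) * (1+t) ^ (τ/2) := by
      apply mul_le_mul_of_nonneg_right _ hY.le
      gcongr
      linarith
    linarith
  rw [sqrt_psi'_eq ht]
  have hd : 0 < (1 + Real.log (1 + t)) * (1 + t) ^ ((1:ℝ)/2) :=
    mul_pos (by linarith) (Real.rpow_pos_of_pos hX _)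
  rw [le_div_iff₀ hd]
  have hcomb : (1 + t) ^ (-(1 + τ) / 2) * (1 + t) ^ ((1:ℝ)/2) = ((1 + t) ^ (τ / 2))⁻¹ := by
    rw [← Real.rpow_add hX, show -(1 + τ) / 2 + (1:ℝ)/2 = -(τ/2) by ring,
      Real.rpow_neg hX.le]
  calc τ / (2 + τ) * (1 + t) ^ (-(1 + τ) / 2) * ((1 + Real.log (1 + t)) * (1 + t) ^ ((1:ℝ)/2))
      = τ / (2 + τ) * (1 + Real.log (1 + t)) * ((1 + t) ^ (-(1 + τ) / 2) * (1 + t) ^ ((1:ℝ)/2)) := by ring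
    _ = τ / (2 + τ) * (1 + Real.log (1 + t)) * ((1 + t) ^ (τ / 2))⁻¹ := by rw [hcomb]
    _ ≤ τ / (2 + τ) * (((2 + τ) / τ) * (1 + t) ^ (τ / 2)) * ((1 + t) ^ (τ / 2))⁻¹ := by
        apply mul_le_mul_of_nonneg_right _ (inv_nonneg.mpr hY.le)
        exact mul_le_mul_of_nonneg_left hkey (by positivity)
    _ = 1 := by field_simp

lemma sqrt_psi'_cont : Continuous fun t : ℝ => Real.sqrt (psi' t) := by
  apply Real.continuous_sqrt.comp
  unfold psi'
  have h1 : Continuous fun t : ℝ => 1 + |t| := by continuity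
  have h2 : Continuous fun t : ℝ => 1 + Real.log (1 + |t|) :=
    continuous_const.add (h1.log fun t => by positivity)
  apply Continuous.div continuous_const ((h2.pow 2).mul h1)
  intro t
  have hL : 0 ≤ Real.log (1 + |t|) := Real.log_nonneg (le_add_of_nonneg_right (abs_nonneg t))
  exact mul_ne_zero (pow_ne_zero _ (by linarith : (0:ℝ) < 1 + Real.log (1 + |t|)).ne') (by positivity)

lemma int_g {τ : ℝ} (hτ0 : 0 < τ) (hτ1 : τ < 1) {u : ℝ} (hu : 0 ≤ u) :
    ∫ t in (0:ℝ)..u, τ / (2 + τ) * (1 + t) ^ (-(1 + τ) / 2)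
      = 2 * τ / ((2 + τ) * (1 - τ)) * ((1 + u) ^ ((1 - τ) / 2) - 1) := by
  rw [intervalIntegral.integral_const_mul]
  have h := intervalIntegral.integral_comp_add_left (a := (0:ℝ)) (b := u)
    (fun x : ℝ => x ^ (-(1 + τ) / 2)) 1
  simp only [add_zero] at h
  rw [h, integral_rpow (Or.inl (by linarith))]
  rw [show -(1 + τ) / 2 + 1 = (1 - τ) / 2 by ring, Real.one_rpow]
  field_simp

lemma chit_lb {τ : ℝ} (hτ0 : 0 < τ) (hτ1 : τ < 1) {u : ℝ} (hu : 0 ≤ u) :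
    2 * τ / ((2 + τ) * (1 - τ)) * ((1 + u) ^ ((1 - τ) / 2) - 1) ≤ chit u := by
  rw [← int_g hτ0 hτ1 hu, chit]
  apply intervalIntegral.integral_mono_on hu
  · apply ContinuousOn.intervalIntegrable
    apply ContinuousOn.mul continuousOn_const
    apply ContinuousOn.rpow_const (by fun_prop)
    intro x hx
    rw [Set.uIcc_of_le hu] at hx
    left
    have := hx.1
    intro hc; linarith [hc]
  · exact sqrt_psi'_cont.continuousOn.intervalIntegrable
  · intro t ht
    exact ptwise hτ0 (by linarith) ht.1

theorem stmt_11 (τ : ℝ) (hτ : τ ∈ Set.Ioo (0 : ℝ) 1) (s : ℝ) :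
    1 / psi' s ≤ 4 / τ ^ 2 * (|chit s| / τ + 1) ^ (2 * (1 + τ) / (1 - τ)) := by
  obtain ⟨hτ0, hτ1⟩ := hτ
  set x : ℝ := 1 + |s| with hxdef
  have hx1 : (1:ℝ) ≤ x := le_add_of_nonneg_right (abs_nonneg s)
  have hx0 : (0:ℝ) < x := by linarith
  have hL : 0 ≤ Real.log x := Real.log_nonneg hx1
  -- Step A: lower bound on |chit s|
  have hA : 2 * τ / ((2 + τ) * (1 - τ)) * (x ^ ((1 - τ) / 2) - 1) ≤ |chit s| := by
    rcases le_or_gt 0 s with hs | hs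
    · have := chit_lb hτ0 hτ1 hs
      rw [hxdef, abs_of_nonneg hs]
      exact le_trans this (le_abs_self _)
    · have h2 := chit_lb hτ0 hτ1 (by linarith : (0:ℝ) ≤ -s)
      rw [hxdef, abs_of_neg hs]
      calc 2 * τ / ((2 + τ) * (1 - τ)) * ((1 + -s) ^ ((1 - τ) / 2) - 1) ≤ chit (-s) := h2
        _ = - chit s := chit_neg s
        _ ≤ |chit s| := neg_le_abs _
  -- Step B
  have hxp1 : (1:ℝ) ≤ x ^ ((1 - τ) / 2) := one_le_rpow_aux hx1 (by linarith)
  have hB : x ^ ((1 - τ) / 2) ≤ |chit s| / τ + 1 := by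
    have hcd : (0:ℝ) < (2 + τ) * (1 - τ) := by nlinarith
    have h1 : 2 * τ / ((2 + τ) * (1 - τ)) * (x ^ ((1 - τ) / 2) - 1) / τ
        = 2 / ((2 + τ) * (1 - τ)) * (x ^ ((1 - τ) / 2) - 1) := by
      field_simp
    have h2 : x ^ ((1 - τ) / 2) - 1 ≤ 2 / ((2 + τ) * (1 - τ)) * (x ^ ((1 - τ) / 2) - 1) := by
      have hc1 : (1:ℝ) ≤ 2 / ((2 + τ) * (1 - τ)) := by
        rw [le_div_iff₀ hcd]; nlinarith
      nlinarith
    have h3 : 2 * τ / ((2 + τ) * (1 - τ)) * (x ^ ((1 - τ) / 2) - 1) / τ ≤ |chit s| / τ :=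
      (div_le_div_iff_of_pos_right hτ0).mpr hA
    rw [h1] at h3
    linarith
  -- Step C
  have hC : x ^ (1 + τ) ≤ (|chit s| / τ + 1) ^ (2 * (1 + τ) / (1 - τ)) := by
    have he : 0 ≤ 2 * (1 + τ) / (1 - τ) := div_nonneg (by linarith) (by linarith)
    have := Real.rpow_le_rpow (by positivity) hB he
    rwa [← Real.rpow_mul hx0.le,
      show (1 - τ) / 2 * (2 * (1 + τ) / (1 - τ)) = 1 + τ by
        have hone : (1:ℝ) - τ ≠ 0 := by linarith
        field_simp] at this
  -- Step D
  have hD : 1 / psi' s ≤ 4 / τ ^ 2 * x ^ (1 + τ) := by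
    have h1 : 1 / psi' s = (1 + Real.log x) ^ 2 * x := by
      rw [psi', one_div_one_div]
    have h2 := key_log hτ0 (by linarith) hx1
    have h3 : (1 + Real.log x) ^ 2 ≤ (2 / τ) ^ 2 * (x ^ (τ / 2)) ^ 2 := by
      have := mul_self_le_mul_self (by linarith) h2
      calc (1 + Real.log x) ^ 2 = (1 + Real.log x) * (1 + Real.log x) := sq (1 + Real.log x) ▸ rfl
        _ ≤ (2 / τ * x ^ (τ / 2)) * (2 / τ * x ^ (τ / 2)) := this
        _ = (2 / τ) ^ 2 * (x ^ (τ / 2)) ^ 2 := by ring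
    have h4 : (x ^ (τ / 2)) ^ 2 = x ^ τ := by
      rw [sq, ← Real.rpow_add hx0]; norm_num
    have h5 : x ^ (1 + τ) = x * x ^ τ := by
      rw [Real.rpow_add hx0, Real.rpow_one]
    rw [h1, h5]
    have h6 : (2 / τ) ^ 2 = 4 / τ ^ 2 := by field_simp; ring
    calc (1 + Real.log x) ^ 2 * x ≤ (4 / τ ^ 2 * x ^ τ) * x := by
          apply mul_le_mul_of_nonneg_right _ hx0.le
          rw [← h4, ← h6]; exact h3
      _ = 4 / τ ^ 2 * (x * x ^ τ) := by ring
  calc 1 / psi' s ≤ 4 / τ ^ 2 * x ^ (1 + τ) := hD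
    _ ≤ 4 / τ ^ 2 * (|chit s| / τ + 1) ^ (2 * (1 + τ) / (1 - τ)) := by
        apply mul_le_mul_of_nonneg_left hC (by positivity)
end
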